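/- Let G be a finite abelian group of order n that is not an elementary abelian 2-group, with subgroup of involutions of order l, and let m be a positive integer. Then G \ {0} contains an m-element subset summing to 0 if and only if: 2 ≤ m ≤ n-3, or (m = n-2 and l = 2), or (m = n-1 and l ≠ 2). -/

import Mathlib

set_option linter.unusedSectionVars false
set_option linter.unusedVariables false
set_option maxHeartbeats 1000000

open Finset

section Aux
variable {G : Type*} [AddCommGroup G] [Fintype G] [DecidableEq G]

lemma aux_even_card : ∀ (A : Finset G) (f : G → G),
    (∀ a ∈ A, f a ∈ A) → (∀ a ∈ A, f (f a) = a) → (∀ a ∈ A, f a ≠ a) → Even A.card := by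
  intro A
  induction A using Finset.strongInduction with
  | _ A ih =>
    intro f h1 h2 h3
    rcases A.eq_empty_or_nonempty with rfl | ⟨x, hx⟩
    · simp
    · have hfx := h1 x hx
      have hxne : f x ≠ x := h3 x hx
      have hsub : {x, f x} ⊆ A := by
        intro y hy; simp only [Finset.mem_insert, Finset.mem_singleton] at hy
        rcases hy with rfl | rfl; exacts [hx, hfx]
      have hcard : (A \ {x, f x}).card = A.card - 2 := by
        rw [Finset.card_sdiff_of_subset hsub, Finset.card_pair hxne.symm]
      have hss : A \ {x, f x} ⊂ A := by
        apply Finset.sdiff_ssubset hsub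
        simp
      have hA' : Even (A \ {x, f x}).card := by
        apply ih _ hss f
        · intro a ha
          simp only [Finset.mem_sdiff, Finset.mem_insert, Finset.mem_singleton] at ha ⊢
          obtain ⟨haA, hne⟩ := ha
          push_neg at hne
          refine ⟨h1 a haA, ?_⟩
          rintro (h | h)
          · exact hne.2 (by rw [← h2 a haA, h])
          · 
            have : a = x := by
              have := h2 a haA; have h2x := h2 x hx
              calc a = f (f a) := (h2 a haA).symm
                _ = f (f x) := by rw [h]
                _ = x := h2 x hx
            exact hne.1 this
        · intro a ha; exact h2 a (Finset.mem_sdiff.mp ha).1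
        · intro a ha; exact h3 a (Finset.mem_sdiff.mp ha).1
      have h2le : 2 ≤ A.card := by
        have := Finset.card_le_card hsub
        rwa [Finset.card_pair hxne.symm] at this
      obtain ⟨c, hc⟩ := hA'
      exact ⟨c + 1, by omega⟩

lemma aux_pairs : ∀ (e : ℕ) (A : Finset G), (∀ a ∈ A, -a ∈ A) → (∀ a ∈ A, a + a ≠ 0) →
    Even e → e ≤ A.card → ∃ B, B ⊆ A ∧ B.card = e ∧ B.sum id = 0 := by
  intro e
  induction e using Nat.strong_induction_on with
  | _ e ih =>
    intro A hneg hff he hle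
    match e, he, hle with
    | 0, _, _ => exact ⟨∅, by simp⟩
    | 1, he, _ => simp at he
    | (k+2), he, hle =>
      have hkeven : Even k := by obtain ⟨c, hc⟩ := he; exact ⟨c - 1, by omega⟩
      obtain ⟨x, hx⟩ := Finset.card_pos.mp (show 0 < A.card by omega)
      have hnx : -x ∈ A := hneg x hx
      have hxne : x ≠ -x := by
        intro h; exact hff x hx (by nth_rewrite 2 [h]; simp)
      have hsub : {x, -x} ⊆ A := by
        intro y hy; simp only [Finset.mem_insert, Finset.mem_singleton] at hy
        rcases hy with rfl | rfl; exacts [hx, hnx]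
      have hcard : (A \ {x, -x}).card = A.card - 2 := by
        rw [Finset.card_sdiff_of_subset hsub, Finset.card_pair hxne]
      obtain ⟨B', hB'sub, hB'card, hB'sum⟩ := ih k (by omega) (A \ {x, -x})
        (by
          intro a ha
          simp only [Finset.mem_sdiff, Finset.mem_insert, Finset.mem_singleton] at ha ⊢
          push_neg at ha
          refine ⟨hneg a ha.1, ?_⟩
          rintro (h | h)
          · exact ha.2.2 (by rw [← neg_neg a, h])
          · exact ha.2.1 (by rw [← neg_neg a, h, neg_neg]))
        (by intro a ha; exact hff a (Finset.mem_sdiff.mp ha).1)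
        hkeven (by omega)
      have hxB' : x ∉ B' := fun h => by simpa using (hB'sub h)
      have hnxB' : -x ∉ B' := fun h => by simpa using (hB'sub h)
      refine ⟨insert x (insert (-x) B'), ?_, ?_, ?_⟩
      · intro y hy
        simp only [Finset.mem_insert] at hy
        rcases hy with rfl | rfl | hy
        exacts [hx, hnx, (Finset.sdiff_subset (hB'sub hy))]
      · rw [Finset.card_insert_of_notMem (by simp [hxB', hxne]),
          Finset.card_insert_of_notMem hnxB', hB'card]
      · rw [Finset.sum_insert (by simp [hxB', hxne]), Finset.sum_insert hnxB', hB'sum]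
        simp


lemma aux_quad (a b : G) (ha2 : a + a = 0) (hb2 : b + b = 0) (ha : a ≠ 0) (hb : b ≠ 0)
    (hab : a ≠ b) :
    ∀ T : Finset G, (∀ x ∈ T, x + x = 0) → (∀ x ∈ T, x + a ∈ T) → (∀ x ∈ T, x + b ∈ T) →
      T.sum id = 0 ∧ T.card % 4 = 0 := by
  have hna : -a = a := neg_eq_of_add_eq_zero_left ha2
  have hnb : -b = b := neg_eq_of_add_eq_zero_left hb2
  have hcne : a + b ≠ 0 := fun h => hab (by rw [eq_neg_of_add_eq_zero_left h, hnb])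
  intro T
  induction T using Finset.strongInduction with
  | _ T ih =>
    intro hT2 hTa hTb
    rcases T.eq_empty_or_nonempty with rfl | ⟨x, hx⟩
    · simp
    · have hxa : x + a ∈ T := hTa x hx
      have hxb : x + b ∈ T := hTb x hx
      have hxab : x + a + b ∈ T := hTb _ hxa
      have hx2 : x + x = 0 := hT2 x hx
      -- distinctness
      have d1 : x ≠ x + a := fun h => ha (by rwa [left_eq_add] at h)
      have d2 : x ≠ x + b := fun h => hb (by rwa [left_eq_add] at h)
      have d3 : x ≠ x + a + b := fun h => hcne (by rw [add_assoc] at h; rwa [left_eq_add] at h)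
      have d4 : x + a ≠ x + b := fun h => hab (by rwa [add_right_inj] at h)
      have d5 : x + a ≠ x + a + b := fun h => hb (by rwa [left_eq_add] at h)
      have d6 : x + b ≠ x + a + b := fun h => ha (by rw [add_assoc, add_comm a b, ← add_assoc] at h; rwa [left_eq_add] at h)
      set Q : Finset G := {x, x + a, x + b, x + a + b} with hQ
      have hQsub : Q ⊆ T := by
        intro y hy
        simp only [hQ, Finset.mem_insert, Finset.mem_singleton] at hy
        rcases hy with rfl | rfl | rfl | rfl
        exacts [hx, hxa, hxb, hxab]
      have hQcard : Q.card = 4 := by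
        rw [hQ]
        rw [Finset.card_insert_of_notMem (by simp [d1, d2, d3]),
          Finset.card_insert_of_notMem (by simp [d4, d5]),
          Finset.card_insert_of_notMem (by simp [d6])]
        simp
      have hQsum : Q.sum id = 0 := by
        rw [hQ]
        rw [Finset.sum_insert (by simp [d1, d2, d3]),
          Finset.sum_insert (by simp [d4, d5]),
          Finset.sum_insert (by simp [d6]), Finset.sum_singleton]
        have : (id x + (id (x + a) + (id (x + b) + id (x + a + b)))) =
            (x + x) + ((x + x) + ((a + a) + (b + b))) := by
          simp only [id]; abel
        rw [this, hx2, ha2, hb2]; simp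
      -- closure of Q under +a and +b
      have hQa : ∀ y ∈ Q, y + a ∈ Q := by
        intro y hy
        simp only [hQ, Finset.mem_insert, Finset.mem_singleton] at hy ⊢
        rcases hy with rfl | rfl | rfl | rfl
        · right; left; rfl
        · left; rw [add_assoc, ha2, add_zero]
        · right; right; right
          rw [show x + b + a = x + a + b by abel]
        · right; right; left
          rw [show x + a + b + a = x + b + (a + a) by abel, ha2, add_zero]
      have hQb : ∀ y ∈ Q, y + b ∈ Q := by
        intro y hy
        simp only [hQ, Finset.mem_insert, Finset.mem_singleton] at hy ⊢
        rcases hy with rfl | rfl | rfl | rfl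
        · right; right; left; rfl
        · right; right; right; rfl
        · left; rw [add_assoc, hb2, add_zero]
        · right; left
          rw [show x + a + b + b = x + a + (b + b) by abel, hb2, add_zero]
      have hss : T \ Q ⊂ T := by
        apply Finset.sdiff_ssubset hQsub
        rw [hQ]; exact Finset.insert_nonempty _ _
      have hinv : ∀ (c : G), (∀ y ∈ Q, y + c ∈ Q) → (∀ y ∈ T, y + c ∈ T) →
          ∀ y ∈ T \ Q, y + c ∈ T \ Q := by
        intro c hQc hTc y hy
        rw [Finset.mem_sdiff] at hy ⊢
        refine ⟨hTc y hy.1, fun hmem => hy.2 ?_⟩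
        have hy2 : y + y = 0 := hT2 y hy.1
        have hc2 : c + c = 0 := by
          have := hT2 _ (hTc y hy.1)
          have h' : (y + y) + (c + c) = 0 := by rw [← this]; abel
          rwa [hy2, zero_add] at h'
        have : (y + c) + c = y := by rw [add_assoc, hc2, add_zero]
        rw [← this]; exact hQc _ hmem
      obtain ⟨hsum', hcard'⟩ := ih (T \ Q) hss
        (fun y hy => hT2 y (Finset.mem_sdiff.mp hy).1)
        (hinv a hQa hTa) (hinv b hQb hTb)
      constructor
      · rw [← Finset.sum_sdiff hQsub, hsum', hQsum, add_zero]
      · have : T.card = (T \ Q).card + 4 := by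
          rw [Finset.card_sdiff_of_subset hQsub, hQcard]
          have := Finset.card_le_card hQsub
          omega
        omega

lemma aux_solcard (c : G) :
    (univ.filter fun x : G => x + x = c).card ≤ (univ.filter fun x : G => x + x = 0).card := by
  rcases (univ.filter fun x : G => x + x = c).eq_empty_or_nonempty with h | ⟨x0, hx0⟩
  · simp [h]
  · rw [Finset.mem_filter] at hx0
    apply Finset.card_le_card_of_injOn (fun x => x - x0)
    · intro x hx
      rw [Finset.mem_coe, Finset.mem_filter] at hx ⊢
      refine ⟨Finset.mem_univ _, ?_⟩
      have : (x - x0) + (x - x0) = (x + x) - (x0 + x0) := by abel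
      rw [this, hx.2, hx0.2, sub_self]
    · intro x _ y _ h
      simpa using sub_left_injective h


/-- zero-sum subsets of the nonzero involutions, of a given size -/
def GoodH (G : Type*) [AddCommGroup G] (s : ℕ) : Prop :=
  ∃ C : Finset G, (∀ x ∈ C, x + x = 0) ∧ (0 : G) ∉ C ∧ C.sum id = 0 ∧ C.card = s

lemma aux_grow (C : Finset G) (hCH : ∀ x ∈ C, x + x = 0) (hC0 : (0:G) ∉ C)
    (hsum : C.sum id = 0) (hne : C.Nonempty)
    (hcard : 2 * C.card < (univ.filter fun g : G => g + g = 0).card) :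
    GoodH G (C.card + 1) := by
  obtain ⟨z, hz⟩ := hne
  have hz2 : z + z = 0 := hCH z hz
  have hznz : z ≠ 0 := fun h => hC0 (h ▸ hz)
  set bad : Finset G := C ∪ C.image (fun c => z + c) with hbad
  have hbadcard : bad.card ≤ 2 * C.card := by
    calc bad.card ≤ C.card + (C.image (fun c => z + c)).card := Finset.card_union_le _ _
      _ ≤ C.card + C.card := by
          have := Finset.card_image_le (s := C) (f := fun c => z + c); omega
      _ = 2 * C.card := by ring
  have hnotsub : ¬ (univ.filter fun g : G => g + g = 0) ⊆ bad := by
    intro h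
    have := Finset.card_le_card h
    omega
  obtain ⟨x, hxH, hxbad⟩ := Finset.not_subset.mp hnotsub
  rw [Finset.mem_filter] at hxH
  have hx2 : x + x = 0 := hxH.2
  simp only [hbad, Finset.mem_union, Finset.mem_image, not_or, not_exists] at hxbad
  push_neg at hxbad
  obtain ⟨hxC, hximg⟩ := hxbad
  have hx0 : x ≠ 0 := by
    intro h
    exact hximg z hz (by rw [hz2, h])
  have hxz : x ≠ z := fun h => hxC (h ▸ hz)
  have hxzC : x + z ∉ C := by
    intro h
    apply hximg (x + z) h
    rw [show z + (x + z) = x + (z + z) by abel, hz2, add_zero]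
  have hxz0 : x + z ≠ 0 := by
    intro h
    exact hxz (by rw [eq_neg_of_add_eq_zero_left h, neg_eq_of_add_eq_zero_left hz2])
  have hxxz : x ≠ x + z := fun h => hznz (by rwa [left_eq_add] at h)
  have hzC : z ∈ C := hz
  have hxzE : x + z ∉ C.erase z := fun h => hxzC (Finset.mem_of_mem_erase h)
  have hxE : x ∉ insert (x + z) (C.erase z) := by
    simp only [Finset.mem_insert]
    rintro (h | h)
    exacts [hxxz h, hxC (Finset.mem_of_mem_erase h)]
  refine ⟨insert x (insert (x + z) (C.erase z)), ?_, ?_, ?_, ?_⟩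
  · intro y hy
    simp only [Finset.mem_insert] at hy
    rcases hy with rfl | rfl | hy
    · exact hx2
    · rw [show x + z + (x + z) = (x + x) + (z + z) by abel, hx2, hz2, add_zero]
    · exact hCH y (Finset.mem_of_mem_erase hy)
  · simp only [Finset.mem_insert]
    rintro (h | h | h)
    exacts [hx0 h.symm, hxz0 h.symm, hC0 (Finset.mem_of_mem_erase h)]
  · have herase := Finset.sum_erase_add C id hz
    rw [hsum] at herase
    have h2 : (C.erase z).sum id = -id z := eq_neg_of_add_eq_zero_left herase
    rw [Finset.sum_insert hxE, Finset.sum_insert hxzE, h2]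
    simp only [id]
    rw [show x + (x + z + -z) = x + x by abel, hx2]
  · rw [Finset.card_insert_of_notMem hxE, Finset.card_insert_of_notMem hxzE,
      Finset.card_erase_of_mem hz]
    have : 1 ≤ C.card := Finset.card_pos.mpr ⟨z, hz⟩
    omega

lemma aux_compl (hHsum : (univ.filter fun g : G => g + g = 0).sum id = 0)
    (s : ℕ) (hgood : GoodH G s) (hs : s ≤ (univ.filter fun g : G => g + g = 0).card - 1) :
    GoodH G ((univ.filter fun g : G => g + g = 0).card - 1 - s) := by
  obtain ⟨C, hCH, hC0, hCsum, hCcard⟩ := hgood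
  set Hs := univ.filter fun g : G => g + g = 0 with hHs
  have h0H : (0:G) ∈ Hs := by simp [hHs]
  have hCsub : C ⊆ Hs.erase 0 := by
    intro x hx
    rw [Finset.mem_erase]
    exact ⟨fun h => hC0 (h ▸ hx), by simp [hHs, hCH x hx]⟩
  have hesum : (Hs.erase 0).sum id = 0 := by
    rw [Finset.sum_erase _ (by simp), hHsum]
  refine ⟨(Hs.erase 0) \ C, ?_, ?_, ?_, ?_⟩
  · intro x hx
    have := (Finset.mem_sdiff.mp hx).1
    rw [Finset.mem_erase, hHs, Finset.mem_filter] at this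
    exact this.2.2
  · intro h
    have := (Finset.mem_sdiff.mp h).1
    exact (Finset.mem_erase.mp this).1 rfl
  · have h := Finset.sum_sdiff hCsub (f := id)
    rw [hesum, hCsum, add_zero] at h
    exact h
  · rw [Finset.card_sdiff_of_subset hCsub, Finset.card_erase_of_mem h0H, hCcard]


section
variable (a b : G) (ha2 : a + a = 0) (hb2 : b + b = 0) (ha : a ≠ 0) (hb : b ≠ 0) (hab : a ≠ b)

include ha2 hb2 ha hb hab in
lemma aux_good3 : GoodH G 3 := by
  have hcne : a + b ≠ 0 := fun h => hab (by rw [eq_neg_of_add_eq_zero_left h, neg_eq_of_add_eq_zero_left hb2])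
  have d1 : a ≠ a + b := fun h => hb (by rwa [left_eq_add] at h)
  have d2 : b ≠ a + b := fun h => ha (by rw [add_comm] at h; rwa [left_eq_add] at h)
  refine ⟨{a, b, a + b}, ?_, ?_, ?_, ?_⟩
  · intro x hx
    simp only [Finset.mem_insert, Finset.mem_singleton] at hx
    rcases hx with rfl | rfl | rfl
    · exact ha2
    · exact hb2
    · rw [show a + b + (a + b) = (a + a) + (b + b) by abel, ha2, hb2, add_zero]
  · simp only [Finset.mem_insert, Finset.mem_singleton]
    rintro (h | h | h)
    exacts [ha h.symm, hb h.symm, hcne h.symm]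
  · rw [Finset.sum_insert (by simp [hab, d1]), Finset.sum_insert (by simp [d2]),
      Finset.sum_singleton]
    simp only [id]
    rw [show a + (b + (a + b)) = (a + a) + (b + b) by abel, ha2, hb2, add_zero]
  · rw [Finset.card_insert_of_notMem (by simp [hab, d1]),
      Finset.card_insert_of_notMem (by simp [d2]), Finset.card_singleton]

include ha2 hb2 ha hb hab in
lemma aux_range (hHsum : (univ.filter fun g : G => g + g = 0).sum id = 0)
    (s : ℕ) (h3 : 3 ≤ s) (h4 : s ≤ (univ.filter fun g : G => g + g = 0).card - 4) :
    GoodH G s := by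
  set Hs := univ.filter fun g : G => g + g = 0 with hHs
  set l := Hs.card with hl
  have hl7 : 7 ≤ l := by omega
  have C1 : ∀ s : ℕ, 3 ≤ s → 2 * s ≤ l + 1 → GoodH G s := by
    intro s hs
    induction s, hs using Nat.le_induction with
    | base => intro _; exact aux_good3 a b ha2 hb2 ha hb hab
    | succ s hs ih =>
      intro hbound
      obtain ⟨C, hCH, hC0, hCsum, hCcard⟩ := ih (by omega)
      have := aux_grow C hCH hC0 hCsum (Finset.card_pos.mp (by omega)) (by rw [hCcard, ← hHs]; omega)
      rwa [hCcard] at this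
  by_cases hc : 2 * s ≤ l + 1
  · exact C1 s h3 hc
  · have hs' : 3 ≤ l - 1 - s := by omega
    have hb' : 2 * (l - 1 - s) ≤ l + 1 := by omega
    have := aux_compl hHsum (l - 1 - s) (C1 _ hs' hb') (by rw [← hHs]; omega)
    rw [← hHs] at this
    rwa [show l - 1 - (l - 1 - s) = s by omega] at this
end


lemma aux_construct (hG : ¬ ∀ g : G, g + g = 0) (m : ℕ) (h2 : 2 ≤ m)
    (h3 : m ≤ Fintype.card G - 3) :
    ∃ A : Finset G, (0:G) ∉ A ∧ A.card = m ∧ A.sum id = 0 := by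
  set n := Fintype.card G with hn
  set Hs := univ.filter (fun g : G => g + g = 0) with hHs
  set Ks := univ.filter (fun g : G => ¬ (g + g = 0)) with hKs
  have hsplit : Hs.card + Ks.card = n := by
    rw [hHs, hKs, Finset.card_filter_add_card_filter_not, Finset.card_univ]
  have h0H : (0:G) ∈ Hs := by simp [hHs]
  have hK0 : (0:G) ∉ Ks := by simp [hKs]
  have hKmem : ∀ a : G, a ∈ Ks ↔ ¬ (a + a = 0) := by intro a; simp [hKs]
  have hKneg : ∀ a ∈ Ks, -a ∈ Ks := by
    intro a ha
    rw [hKmem] at ha ⊢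
    intro h; apply ha
    have : -(a + a) = 0 := by rw [show -(a+a) = -a + -a by abel, h]
    rw [← neg_neg (a+a), this, neg_zero]
  have hKff : ∀ a ∈ Ks, a + a ≠ 0 := fun a ha => (hKmem a).mp ha
  have hKeven : Even Ks.card := by
    apply aux_even_card Ks (fun x => -x) hKneg (by simp)
    intro a ha h
    exact hKff a ha (neg_eq_iff_add_eq_zero.mp h)
  have hKne : Ks.Nonempty := by
    push_neg at hG; obtain ⟨g, hg⟩ := hG; exact ⟨g, (hKmem g).mpr hg⟩
  have hKmod : Ks.card % 2 = 0 := Nat.even_iff.mp hKeven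
  have hK2 : 2 ≤ Ks.card := by
    have := Finset.card_pos.mpr hKne; omega
  have hl1 : 1 ≤ Hs.card := Finset.card_pos.mpr ⟨0, h0H⟩
  have hn3 : 3 ≤ n := by omega
  have hmem0 : ∀ x : G, x ∈ Ks → x ≠ 0 := fun x hx h => hK0 (h ▸ hx)
  -- case split on Hs.card
  rcases show Hs.card = 1 ∨ Hs.card = 2 ∨ 3 ≤ Hs.card by omega with hl | hl | hl
  · -- l = 1 : Hs = {0}
    obtain ⟨w, hw⟩ := Finset.card_eq_one.mp hl
    have hw0 : w = 0 := by
      have : (0:G) ∈ ({w} : Finset G) := hw ▸ h0H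
      exact (Finset.mem_singleton.mp this).symm
    have hH0 : Hs = {0} := by rw [hw, hw0]
    have hKcard : Ks.card = n - 1 := by omega
    rcases Nat.even_or_odd m with hme | hmo
    · obtain ⟨B, hBsub, hBcard, hBsum⟩ := aux_pairs m Ks hKneg hKff hme (by omega)
      exact ⟨B, fun h => hK0 (hBsub h), hBcard, hBsum⟩
    · have hmmod : m % 2 = 1 := Nat.odd_iff.mp hmo
      have hm4 : m ≤ n - 4 := by omega
      have hn7 : 7 ≤ n := by omega
      obtain ⟨x, hxK⟩ := hKne
      have hx0 : x ≠ 0 := hmem0 x hxK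
      set bad : Finset G :=
        insert (0:G) (insert x (insert (-x) (insert (-x + -x)
          (univ.filter fun y : G => y + y = -x)))) with hbad
      have hsolle : (univ.filter fun y : G => y + y = -x).card ≤ 1 := by
        have := aux_solcard (G := G) (-x)
        rw [← hHs] at this
        omega
      have hbadcard : bad.card ≤ 5 := by
        have h1 := Finset.card_insert_le (0:G)
          (insert x (insert (-x) (insert (-x + -x) (univ.filter fun y : G => y + y = -x))))
        have h2 := Finset.card_insert_le x
          (insert (-x) (insert (-x + -x) (univ.filter fun y : G => y + y = -x)))
        have h3 := Finset.card_insert_le (-x)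
          (insert (-x + -x) (univ.filter fun y : G => y + y = -x))
        have h4 := Finset.card_insert_le (-x + -x) (univ.filter fun y : G => y + y = -x)
        rw [hbad]
        omega
      have hnotsub : ¬ (univ : Finset G) ⊆ bad := by
        intro h
        have := Finset.card_le_card h
        rw [Finset.card_univ, ← hn] at this
        omega
      obtain ⟨y, -, hybad⟩ := Finset.not_subset.mp hnotsub
      simp only [hbad, Finset.mem_insert, Finset.mem_filter, Finset.mem_univ, true_and,
        not_or] at hybad
      obtain ⟨hy0, hyx, hynx, hy2x, hyy⟩ := hybad
      set z := -(x + y) with hz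
      have hz0 : z ≠ 0 := by
        rw [hz, neg_ne_zero]
        intro h; exact hynx (eq_neg_of_add_eq_zero_right h)
      have hxz : x ≠ z := by
        intro h
        apply hy2x
        have h1 : x = -(x + y) := h.trans hz
        have h2 : x + (x + y) = 0 := eq_neg_iff_add_eq_zero.mp h1
        have h3 : y = -x + -x + (x + (x + y)) := by abel
        rw [h2, add_zero] at h3
        exact h3
      have hyz : y ≠ z := by
        intro h
        apply hyy
        have h1 : y = -(x + y) := h.trans hz
        have h2 : y + (x + y) = 0 := eq_neg_iff_add_eq_zero.mp h1
        have h3 : y + y = -x + (y + (x + y)) := by abel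
        rw [h2, add_zero] at h3
        exact h3
      have hxy : x ≠ y := fun h => hyx h.symm
      have hT0 : (0:G) ∉ ({x, y, z} : Finset G) := by
        simp only [Finset.mem_insert, Finset.mem_singleton]
        rintro (h | h | h)
        exacts [hx0 h.symm, hy0 h.symm, hz0 h.symm]
      have hTcard : ({x, y, z} : Finset G).card = 3 := by
        rw [Finset.card_insert_of_notMem (by simp [hxy, hxz]),
          Finset.card_insert_of_notMem (by simp [hyz]), Finset.card_singleton]
      have hTsum : ({x, y, z} : Finset G).sum id = 0 := by
        rw [Finset.sum_insert (by simp [hxy, hxz]), Finset.sum_insert (by simp [hyz]),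
          Finset.sum_singleton]
        simp only [id, hz]
        abel
      set R : Finset G := ({x, y, z} : Finset G) ∪ ({x, y, z} : Finset G).image (fun t => -t)
        with hR
      have hTR : ({x, y, z} : Finset G) ⊆ R := Finset.subset_union_left
      have hRneg : ∀ u ∈ R, -u ∈ R := by
        intro u hu
        rw [hR, Finset.mem_union] at hu ⊢
        rcases hu with hu | hu
        · right; exact Finset.mem_image_of_mem _ hu
        · left; obtain ⟨t, ht, rfl⟩ := Finset.mem_image.mp hu; rwa [neg_neg]
      have hRcard : R.card ≤ 6 := by
        have h1 := Finset.card_union_le ({x, y, z} : Finset G)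
          (({x, y, z} : Finset G).image (fun t => -t))
        have h2 := Finset.card_image_le (s := ({x, y, z} : Finset G)) (f := fun t => -t)
        rw [hR]
        omega
      set K' := Ks \ R with hK'
      have hK'neg : ∀ a ∈ K', -a ∈ K' := by
        intro a ha
        rw [hK', Finset.mem_sdiff] at ha ⊢
        refine ⟨hKneg a ha.1, fun h => ha.2 ?_⟩
        have := hRneg _ h; rwa [neg_neg] at this
      have hK'ff : ∀ a ∈ K', a + a ≠ 0 := fun a ha => hKff a (Finset.mem_sdiff.mp ha).1
      have hK'card : Ks.card - 6 ≤ K'.card := by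
        rw [hK']
        have := Finset.le_card_sdiff R Ks
        omega
      obtain ⟨B, hBsub, hBcard, hBsum⟩ := aux_pairs (m - 3) K' hK'neg hK'ff
        (Nat.even_iff.mpr (by omega)) (by omega)
      have hdisj : Disjoint ({x, y, z} : Finset G) B := by
        rw [Finset.disjoint_left]
        intro u hu huB
        have h1 : u ∈ R := hTR hu
        have h2 := hBsub huB
        rw [hK', Finset.mem_sdiff] at h2
        exact h2.2 h1
      refine ⟨({x, y, z} : Finset G) ∪ B, ?_, ?_, ?_⟩
      · rw [Finset.mem_union]
        rintro (h | h)
        exacts [hT0 h, hK0 ((Finset.sdiff_subset (hBsub h)))]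
      · rw [Finset.card_union_of_disjoint hdisj, hTcard, hBcard]; omega
      · rw [Finset.sum_union hdisj, hTsum, hBsum, add_zero]
  · -- l = 2
    obtain ⟨u, v, huv, hHuv⟩ := Finset.card_eq_two.mp hl
    have h0uv : (0:G) = u ∨ (0:G) = v := by
      have := h0H; rw [hHuv] at this; simpa using this
    -- let t be the nonzero element
    obtain ⟨t, ht0, hHeq⟩ : ∃ t : G, t ≠ 0 ∧ Hs = {0, t} := by
      rcases h0uv with h | h
      · exact ⟨v, fun hv => huv (by rw [hv, ← h]), by rw [hHuv, ← h]⟩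
      · exact ⟨u, fun hu => huv (by rw [hu]; exact h), by rw [hHuv, ← h, Finset.pair_comm]⟩
    have ht2 : t + t = 0 := by
      have : t ∈ Hs := by rw [hHeq]; simp
      rw [hHs, Finset.mem_filter] at this; exact this.2
    have htK : t ∉ Ks := by rw [hKmem]; simpa using ht2
    have hKcard : Ks.card = n - 2 := by omega
    rcases Nat.even_or_odd m with hme | hmo
    · obtain ⟨B, hBsub, hBcard, hBsum⟩ := aux_pairs m Ks hKneg hKff hme (by omega)
      exact ⟨B, fun h => hK0 (hBsub h), hBcard, hBsum⟩
    · have hmmod : m % 2 = 1 := Nat.odd_iff.mp hmo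
      have hn6 : 6 ≤ n := by omega
      have hsolle : (univ.filter fun x : G => x + x = t).card ≤ 2 := by
        have := aux_solcard (G := G) t
        rw [← hHs] at this
        omega
      have : (Ks \ (univ.filter fun x : G => x + x = t)).Nonempty := by
        rw [← Finset.card_pos]
        have := Finset.le_card_sdiff (univ.filter fun x : G => x + x = t) Ks
        omega
      obtain ⟨x, hx⟩ := this
      rw [Finset.mem_sdiff] at hx
      obtain ⟨hxK, hxsol⟩ := hx
      have hx2t : x + x ≠ t := by
        intro h; exact hxsol (by simp [h])
      have hx0 : x ≠ 0 := hmem0 x hxK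
      have hx2 : x + x ≠ 0 := hKff x hxK
      have hxt : x ≠ t := fun h => hx2 (by rw [h]; exact ht2)
      set z := t - x with hz
      have hz0 : z ≠ 0 := by rw [hz, sub_ne_zero]; exact fun h => hxt h.symm
      have hzt : z ≠ t := by
        rw [hz]; intro h
        exact hx0 (sub_eq_self.mp h)
      have hzx : z ≠ x := by
        rw [hz]; intro h
        exact hx2t (sub_eq_iff_eq_add.mp h).symm
      have hzK : z ∈ Ks := by
        rw [hKmem]
        intro h
        apply hx2
        have h1 : (t - x) + (t - x) = (t + t) - (x + x) := by abel
        rw [← hz, h, ht2, zero_sub] at h1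
        exact neg_eq_zero.mp h1.symm
      have htx : t ≠ x := fun h => hxt h.symm
      have htz : t ≠ z := fun h => hzt h.symm
      have hxz : x ≠ z := fun h => hzx h.symm
      have hT0 : (0:G) ∉ ({t, x, z} : Finset G) := by
        simp only [Finset.mem_insert, Finset.mem_singleton]
        rintro (h | h | h)
        exacts [ht0 h.symm, hx0 h.symm, hz0 h.symm]
      have hTcard : ({t, x, z} : Finset G).card = 3 := by
        rw [Finset.card_insert_of_notMem (by simp [htx, htz]),
          Finset.card_insert_of_notMem (by simp [hxz]), Finset.card_singleton]
      have hTsum : ({t, x, z} : Finset G).sum id = 0 := by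
        rw [Finset.sum_insert (by simp [htx, htz]), Finset.sum_insert (by simp [hxz]),
          Finset.sum_singleton]
        simp only [id, hz]
        rw [show t + (x + (t - x)) = t + t by abel, ht2]
      set R : Finset G := {x, -x, z, -z} with hR
      have hRcard : R.card ≤ 4 := by
        have h1 := Finset.card_insert_le x ({-x, z, -z} : Finset G)
        have h2 := Finset.card_insert_le (-x) ({z, -z} : Finset G)
        have h3 := Finset.card_insert_le z ({-z} : Finset G)
        have h4 : ({-z} : Finset G).card = 1 := Finset.card_singleton _
        rw [hR]
        omega
      have hRneg : ∀ u ∈ R, -u ∈ R := by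
        intro u hu
        rw [hR] at hu ⊢
        simp only [Finset.mem_insert, Finset.mem_singleton] at hu ⊢
        rcases hu with rfl | rfl | rfl | rfl
        · right; left; rfl
        · left; rw [neg_neg]
        · right; right; right; rfl
        · right; right; left; rw [neg_neg]
      set K' := Ks \ R with hK'
      have hK'neg : ∀ a ∈ K', -a ∈ K' := by
        intro a ha
        rw [hK', Finset.mem_sdiff] at ha ⊢
        refine ⟨hKneg a ha.1, fun h => ha.2 ?_⟩
        have := hRneg _ h; rwa [neg_neg] at this
      have hK'ff : ∀ a ∈ K', a + a ≠ 0 := fun a ha => hKff a (Finset.mem_sdiff.mp ha).1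
      have hK'card : Ks.card - 4 ≤ K'.card := by
        rw [hK']
        have := Finset.le_card_sdiff R Ks
        omega
      obtain ⟨B, hBsub, hBcard, hBsum⟩ := aux_pairs (m - 3) K' hK'neg hK'ff
        (Nat.even_iff.mpr (by omega)) (by omega)
      have hxR : x ∈ R := by rw [hR]; simp
      have hzR : z ∈ R := by rw [hR]; simp
      have hdisj : Disjoint ({t, x, z} : Finset G) B := by
        rw [Finset.disjoint_left]
        intro w hw hwB
        have hBK' := hBsub hwB
        rw [hK', Finset.mem_sdiff] at hBK'
        simp only [Finset.mem_insert, Finset.mem_singleton] at hw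
        rcases hw with rfl | rfl | rfl
        · exact htK hBK'.1
        · exact hBK'.2 hxR
        · exact hBK'.2 hzR
      refine ⟨({t, x, z} : Finset G) ∪ B, ?_, ?_, ?_⟩
      · rw [Finset.mem_union]
        rintro (h | h)
        exacts [hT0 h, hK0 (Finset.sdiff_subset (hBsub h))]
      · rw [Finset.card_union_of_disjoint hdisj, hTcard, hBcard]; omega
      · rw [Finset.sum_union hdisj, hTsum, hBsum, add_zero]
  · -- l ≥ 3
    have hcard_erase : (Hs.erase 0).card = Hs.card - 1 := Finset.card_erase_of_mem h0H
    obtain ⟨a, haE⟩ := Finset.card_pos.mp (show 0 < (Hs.erase 0).card by omega)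
    obtain ⟨b, hbE⟩ := Finset.card_pos.mp
      (show 0 < ((Hs.erase 0).erase a).card by rw [Finset.card_erase_of_mem haE]; omega)
    have hbE' := Finset.mem_of_mem_erase hbE
    have hab : a ≠ b := fun h => (Finset.mem_erase.mp hbE).1 h.symm
    have ha0 : a ≠ 0 := (Finset.mem_erase.mp haE).1
    have hb0 : b ≠ 0 := (Finset.mem_erase.mp hbE').1
    have ha2 : a + a = 0 := by
      have := Finset.mem_of_mem_erase haE; rw [hHs, Finset.mem_filter] at this; exact this.2
    have hb2 : b + b = 0 := by
      have := Finset.mem_of_mem_erase hbE'; rw [hHs, Finset.mem_filter] at this; exact this.2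
    have hHmem2 : ∀ x ∈ Hs, x + x = 0 := by
      intro x hx; rw [hHs, Finset.mem_filter] at hx; exact hx.2
    have hclos : ∀ c : G, c + c = 0 → ∀ x ∈ Hs, x + c ∈ Hs := by
      intro c hc x hx
      rw [hHs, Finset.mem_filter]
      refine ⟨Finset.mem_univ _, ?_⟩
      rw [show (x + c) + (x + c) = (x + x) + (c + c) by abel, hHmem2 x hx, hc, add_zero]
    obtain ⟨hHsum, hHmod⟩ := aux_quad a b ha2 hb2 ha0 hb0 hab Hs hHmem2
      (hclos a ha2) (hclos b hb2)
    have hl4 : 4 ≤ Hs.card := by omega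
    have good0 : GoodH G 0 := ⟨∅, by simp⟩
    have good3 : GoodH G 3 := aux_good3 a b ha2 hb2 ha0 hb0 hab
    have goodl1 : GoodH G (Hs.card - 1) := by
      refine ⟨Hs.erase 0, ?_, ?_, ?_, hcard_erase⟩
      · intro x hx; exact hHmem2 x (Finset.mem_of_mem_erase hx)
      · exact Finset.notMem_erase _ _
      · rw [Finset.sum_erase _ (by simp)]
        exact hHsum
    have hHsum' : (univ.filter fun g : G => g + g = 0).sum id = 0 := by rw [← hHs]; exact hHsum
    obtain ⟨s, hgood, hsle, hpar, hele⟩ :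
        ∃ s, GoodH G s ∧ s ≤ m ∧ (m - s) % 2 = 0 ∧ m - s ≤ Ks.card := by
      by_cases hmK : m ≤ Ks.card
      · rcases Nat.even_or_odd m with hme | hmo
        · exact ⟨0, good0, by omega, by have := Nat.even_iff.mp hme; omega, by omega⟩
        · have := Nat.odd_iff.mp hmo
          exact ⟨3, good3, by omega, by omega, by omega⟩
      · push_neg at hmK
        have hs0u : m - Ks.card ≤ Hs.card - 3 := by omega
        rcases show m - Ks.card = 1 ∨ m - Ks.card = 2 ∨ m - Ks.card = Hs.card - 3 ∨
            (3 ≤ m - Ks.card ∧ m - Ks.card ≤ Hs.card - 4) by omega with h | h | h | h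
        · exact ⟨3, good3, by omega, by omega, by omega⟩
        · have hl8 : 8 ≤ Hs.card := by omega
          have good4 : GoodH G 4 := aux_range a b ha2 hb2 ha0 hb0 hab hHsum' 4
            (by omega) (by rw [← hHs]; omega)
          exact ⟨4, good4, by omega, by omega, by omega⟩
        · exact ⟨Hs.card - 1, goodl1, by omega, by omega, by omega⟩
        · have goods := aux_range a b ha2 hb2 ha0 hb0 hab hHsum' (m - Ks.card)
            (by omega) (by rw [← hHs]; omega)
          exact ⟨m - Ks.card, goods, by omega, by omega, by omega⟩
    obtain ⟨C, hCH, hC0, hCsum, hCcard⟩ := hgood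
    obtain ⟨B, hBsub, hBcard, hBsum⟩ := aux_pairs (m - s) Ks hKneg hKff
      (Nat.even_iff.mpr hpar) hele
    have hdisj : Disjoint C B := by
      rw [Finset.disjoint_left]
      intro w hw hwB
      exact hKff w (hBsub hwB) (hCH w hw)
    refine ⟨C ∪ B, ?_, ?_, ?_⟩
    · rw [Finset.mem_union]
      rintro (h | h)
      exacts [hC0 h, hK0 (hBsub h)]
    · rw [Finset.card_union_of_disjoint hdisj, hCcard, hBcard]; omega
    · rw [Finset.sum_union hdisj, hCsum, hBsum, add_zero]


lemma aux_H1 (hl : (univ.filter fun g : G => g + g = 0).card = 1) :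
    (univ.filter fun g : G => g + g = 0) = {0} := by
  obtain ⟨w, hw⟩ := Finset.card_eq_one.mp hl
  have h0 : (0:G) ∈ univ.filter fun g : G => g + g = 0 := by simp
  rw [hw] at h0 ⊢
  rw [(Finset.mem_singleton.mp h0)]

lemma aux_H2 (hl : (univ.filter fun g : G => g + g = 0).card = 2) :
    ∃ t : G, t ≠ 0 ∧ t + t = 0 ∧ (univ.filter fun g : G => g + g = 0) = {0, t} := by
  obtain ⟨u, v, huv, hUV⟩ := Finset.card_eq_two.mp hl
  have h0 : (0:G) ∈ univ.filter fun g : G => g + g = 0 := by simp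
  rw [hUV] at h0
  simp only [Finset.mem_insert, Finset.mem_singleton] at h0
  have hmem : ∀ x : G, x ∈ ({u, v} : Finset G) → x + x = 0 := by
    intro x hx
    rw [← hUV] at hx
    exact (Finset.mem_filter.mp hx).2
  rcases h0 with h | h
  · refine ⟨v, fun hv => huv (by rw [hv, ← h]), hmem v (by simp), by rw [hUV, ← h]⟩
  · refine ⟨u, fun hu => huv (by rw [hu]; exact h), hmem u (by simp),
      by rw [hUV, ← h, Finset.pair_comm]⟩

lemma aux_H3 (hl : 3 ≤ (univ.filter fun g : G => g + g = 0).card) :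
    (univ.filter fun g : G => g + g = 0).sum id = 0 ∧
      (univ.filter fun g : G => g + g = 0).card % 4 = 0 := by
  set Hs := univ.filter fun g : G => g + g = 0 with hHs
  have h0H : (0:G) ∈ Hs := by simp [hHs]
  have hcard_erase : (Hs.erase 0).card = Hs.card - 1 := Finset.card_erase_of_mem h0H
  obtain ⟨a, haE⟩ := Finset.card_pos.mp (show 0 < (Hs.erase 0).card by omega)
  obtain ⟨b, hbE⟩ := Finset.card_pos.mp
    (show 0 < ((Hs.erase 0).erase a).card by rw [Finset.card_erase_of_mem haE]; omega)
  have hbE' := Finset.mem_of_mem_erase hbE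
  have hab : a ≠ b := fun h => (Finset.mem_erase.mp hbE).1 h.symm
  have ha0 : a ≠ 0 := (Finset.mem_erase.mp haE).1
  have hb0 : b ≠ 0 := (Finset.mem_erase.mp hbE').1
  have hHmem2 : ∀ x ∈ Hs, x + x = 0 := by
    intro x hx; rw [hHs, Finset.mem_filter] at hx; exact hx.2
  have ha2 : a + a = 0 := hHmem2 a (Finset.mem_of_mem_erase haE)
  have hb2 : b + b = 0 := hHmem2 b (Finset.mem_of_mem_erase hbE')
  have hclos : ∀ c : G, c + c = 0 → ∀ x ∈ Hs, x + c ∈ Hs := by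
    intro c hc x hx
    rw [hHs, Finset.mem_filter]
    refine ⟨Finset.mem_univ _, ?_⟩
    rw [show (x + c) + (x + c) = (x + x) + (c + c) by abel, hHmem2 x hx, hc, add_zero]
  exact aux_quad a b ha2 hb2 ha0 hb0 hab Hs hHmem2 (hclos a ha2) (hclos b hb2)

end Aux

theorem stmt16 (G : Type*) [AddCommGroup G] [Fintype G]
    (hG : ¬ ∀ g : G, g + g = 0) (m : ℕ) (hm : 1 ≤ m) :
    (∃ A : Finset G, (0 : G) ∉ A ∧ A.card = m ∧ A.sum id = 0) ↔
    ((2 ≤ m ∧ m ≤ Fintype.card G - 3) ∨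
     (m = Fintype.card G - 2 ∧ Nat.card {g : G // g + g = 0} = 2) ∨
     (m = Fintype.card G - 1 ∧ Nat.card {g : G // g + g = 0} ≠ 2)) := by
  classical
  set n := Fintype.card G with hn
  set Hs := univ.filter (fun g : G => g + g = 0) with hHs
  set Ks := univ.filter (fun g : G => ¬ (g + g = 0)) with hKs
  have hNat : Nat.card {g : G // g + g = 0} = Hs.card := by
    rw [Nat.card_eq_fintype_card, Fintype.card_subtype]
  have hsplit : Hs.card + Ks.card = n := by
    rw [hHs, hKs, Finset.card_filter_add_card_filter_not, Finset.card_univ]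
  have h0H : (0:G) ∈ Hs := by simp [hHs]
  have hK0 : (0:G) ∉ Ks := by simp [hKs]
  have hKmem : ∀ a : G, a ∈ Ks ↔ ¬ (a + a = 0) := by intro a; simp [hKs]
  have hKneg : ∀ a ∈ Ks, -a ∈ Ks := by
    intro a ha
    rw [hKmem] at ha ⊢
    intro h; apply ha
    have h2 : -(a + a) = 0 := by rw [show -(a+a) = -a + -a by abel, h]
    rw [← neg_neg (a+a), h2, neg_zero]
  have hKff : ∀ a ∈ Ks, a + a ≠ 0 := fun a ha => (hKmem a).mp ha
  have hKeven : Even Ks.card := by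
    apply aux_even_card Ks (fun x => -x) hKneg (by simp)
    intro a ha h
    exact hKff a ha (neg_eq_iff_add_eq_zero.mp h)
  have hKne : Ks.Nonempty := by
    push_neg at hG; obtain ⟨g, hg⟩ := hG; exact ⟨g, (hKmem g).mpr hg⟩
  have hK2 : 2 ≤ Ks.card := by
    have h1 := Finset.card_pos.mpr hKne
    have h2 := Nat.even_iff.mp hKeven
    omega
  have hl1 : 1 ≤ Hs.card := Finset.card_pos.mpr ⟨0, h0H⟩
  have hn3 : 3 ≤ n := by omega
  have hKsum : Ks.sum id = 0 := by
    obtain ⟨B, hBsub, hBcard, hBsum⟩ := aux_pairs Ks.card Ks hKneg hKff hKeven le_rfl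
    rwa [Finset.eq_of_subset_of_card_le hBsub (by omega)] at hBsum
  have hSG : (univ : Finset G).sum id = Hs.sum id := by
    have h := Finset.sum_filter_add_sum_filter_not univ (fun g : G => g + g = 0) id
    rw [← hHs, ← hKs, hKsum, add_zero] at h
    exact h.symm
  have hHsum_of_ne2 : Hs.card ≠ 2 → Hs.sum id = 0 := by
    intro h
    rcases show Hs.card = 1 ∨ 3 ≤ Hs.card by omega with h1 | h1
    · have := aux_H1 (G := G) (by rw [← hHs]; exact h1)
      rw [← hHs] at this
      rw [this]
      simp
    · have := (aux_H3 (G := G) (by rw [← hHs]; exact h1)).1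
      rwa [← hHs] at this
  constructor
  · rintro ⟨A, hA0, hAcard, hAsum⟩
    have hAsub : A ⊆ univ.erase 0 :=
      fun x hx => Finset.mem_erase.mpr ⟨fun h => hA0 (h ▸ hx), Finset.mem_univ x⟩
    have hAle : m ≤ n - 1 := by
      have h1 := Finset.card_le_card hAsub
      rw [Finset.card_erase_of_mem (Finset.mem_univ 0), Finset.card_univ, hAcard, ← hn] at h1
      exact h1
    have hm1 : m ≠ 1 := by
      intro h
      obtain ⟨x, hx⟩ := Finset.card_eq_one.mp (by rw [hAcard, h])
      rw [hx, Finset.sum_singleton] at hAsum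
      have hx0 : x = 0 := hAsum
      exact hA0 (by rw [hx, hx0]; simp)
    rcases show m ≤ n - 3 ∨ m = n - 2 ∨ m = n - 1 by omega with h | h | h
    · exact Or.inl ⟨by omega, h⟩
    · refine Or.inr (Or.inl ⟨h, ?_⟩)
      have hcompl : (univ \ A).card = 2 := by
        rw [Finset.card_sdiff_of_subset (Finset.subset_univ A), Finset.card_univ, hAcard, ← hn]
        omega
      obtain ⟨u, v, huv, hUV⟩ := Finset.card_eq_two.mp hcompl
      have h0m : (0:G) ∈ univ \ A := by simp [hA0]
      have hsumc : (univ \ A).sum id = u + v := by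
        rw [hUV, Finset.sum_insert (by simp [huv]), Finset.sum_singleton]
        rfl
      have hS : (univ : Finset G).sum id = u + v := by
        have h2 := Finset.sum_sdiff (Finset.subset_univ A) (f := id)
        rw [hAsum, add_zero, hsumc] at h2
        exact h2.symm
      have hSne : (univ : Finset G).sum id ≠ 0 := by
        rw [hS]
        rw [hUV] at h0m
        simp only [Finset.mem_insert, Finset.mem_singleton] at h0m
        rcases h0m with h' | h'
        · rw [← h', zero_add]
          exact fun hv => huv (by rw [hv, ← h'])
        · rw [← h', add_zero]
          exact fun hu => huv (by rw [hu]; exact h')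
      rw [hNat]
      by_contra hne2
      exact hSne (by rw [hSG]; exact hHsum_of_ne2 hne2)
    · refine Or.inr (Or.inr ⟨h, ?_⟩)
      rw [hNat]
      intro hl2
      obtain ⟨t, ht0, ht2, hHeq⟩ := aux_H2 (G := G) (by rw [← hHs]; exact hl2)
      rw [← hHs] at hHeq
      have hAeq : A = univ.erase 0 := by
        apply Finset.eq_of_subset_of_card_le hAsub
        rw [Finset.card_erase_of_mem (Finset.mem_univ 0), Finset.card_univ, hAcard, ← hn]
        omega
      have hS0 : (univ : Finset G).sum id = 0 := by
        rw [← Finset.sum_erase (univ : Finset G) (f := id) (a := 0) (by simp), ← hAeq, hAsum]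
      rw [hSG, hHeq] at hS0
      rw [Finset.sum_insert (by simp [Ne.symm ht0]), Finset.sum_singleton] at hS0
      simp only [id, zero_add] at hS0
      exact ht0 hS0
  · rintro (⟨h2, h3⟩ | ⟨hm2, hl2⟩ | ⟨hm1, hl2⟩)
    · exact aux_construct hG m h2 h3
    · rw [hNat] at hl2
      obtain ⟨t, ht0, ht2, hHeq⟩ := aux_H2 (G := G) (by rw [← hHs]; exact hl2)
      rw [← hHs] at hHeq
      have hsub : ({0, t} : Finset G) ⊆ univ := Finset.subset_univ _
      refine ⟨univ \ {0, t}, by simp, ?_, ?_⟩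
      · rw [Finset.card_sdiff_of_subset hsub, Finset.card_univ, ← hn,
          Finset.card_pair (show (0:G) ≠ t from fun h => ht0 h.symm), hm2]
      · have h4 := Finset.sum_sdiff hsub (f := id)
        rw [hSG, hHeq] at h4
        exact right_eq_add.mp h4.symm
    · refine ⟨univ.erase 0, Finset.notMem_erase _ _, ?_, ?_⟩
      · rw [Finset.card_erase_of_mem (Finset.mem_univ 0), Finset.card_univ, ← hn, hm1]
      · rw [Finset.sum_erase (univ : Finset G) (f := id) (a := 0) (by simp), hSG]
        apply hHsum_of_ne2
        rw [← hNat]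
        exact hl2
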